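/- Let p2, p1, p0 be real numbers and r a nonzero real number. If ω0 > 0 satisfies ω0⁶ + (p2² − 2*p1)*ω0⁴ + (p1² − 2*p0*p2)*ω0² + p0² − r² = 0, then there exists τ0 ∈ [0, 2π/ω0) such that r*cos(ω0*τ0) = p2*ω0² − p0 and r*sin(ω0*τ0) = p1*ω0 − ω0³; equivalently, λ = iω0 is a root of λ³ + p2*λ² + p1*λ + p0 + r*e^{−λτ0} = 0. -/

import Mathlib

open Real Complex

/-- Every positive root of the sextic admits a critical delay τ0. -/
theorem stmt_8 (p2 p1 p0 : ℝ) (r : ℝ) (hr : r ≠ 0) (ω0 : ℝ) (hω0 : 0 < ω0)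
    (h : ω0 ^ 6 + (p2 ^ 2 - 2 * p1) * ω0 ^ 4 + (p1 ^ 2 - 2 * p0 * p2) * ω0 ^ 2
        + p0 ^ 2 - r ^ 2 = 0) :
    ∃ τ0 : ℝ, 0 ≤ τ0 ∧ τ0 < 2 * Real.pi / ω0 ∧
      r * Real.cos (ω0 * τ0) = p2 * ω0 ^ 2 - p0 ∧
      r * Real.sin (ω0 * τ0) = p1 * ω0 - ω0 ^ 3 ∧
      (Complex.I * ω0) ^ 3 + p2 * (Complex.I * ω0) ^ 2 + p1 * (Complex.I * ω0)
          + p0 + r * Complex.exp (-(Complex.I * ω0) * τ0) = 0 := by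
  set a : ℝ := (p2 * ω0 ^ 2 - p0) / r with ha
  set b : ℝ := (p1 * ω0 - ω0 ^ 3) / r with hb
  have hab : a ^ 2 + b ^ 2 = 1 := by
    rw [ha, hb, div_pow, div_pow, ← add_div, div_eq_one_iff_eq (pow_ne_zero 2 hr)]
    nlinarith [h]
  set z : ℂ := ⟨a, b⟩ with hz
  have habs : ‖z‖ = 1 := by
    rw [Complex.norm_def, Real.sqrt_eq_one, Complex.normSq_apply]; simp only [hz]
    nlinarith [hab]
  have hz0 : z ≠ 0 := by
    intro h0; rw [h0] at habs; simp at habs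
  have hcos : Real.cos (Complex.arg z) = a := by
    rw [Complex.cos_arg hz0, habs]; simp [hz]
  have hsin : Real.sin (Complex.arg z) = b := by
    rw [Complex.sin_arg, habs]; simp [hz]
  set θ : ℝ := if Complex.arg z < 0 then Complex.arg z + 2 * Real.pi else Complex.arg z with hθ
  have hcosθ : Real.cos θ = a := by
    rw [hθ]; split
    · rw [Real.cos_add_two_pi]; exact hcos
    · exact hcos
  have hsinθ : Real.sin θ = b := by
    rw [hθ]; split
    · rw [Real.sin_add_two_pi]; exact hsin
    · exact hsin
  have harg1 := Complex.neg_pi_lt_arg z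
  have harg2 := Complex.arg_le_pi z
  have hpi := Real.pi_pos
  have hθ0 : 0 ≤ θ := by
    rw [hθ]; split <;> [linarith; linarith]
  have hθlt : θ < 2 * Real.pi := by
    rw [hθ]; split <;> [linarith; linarith]
  have hωτ : ω0 * (θ / ω0) = θ := by field_simp
  refine ⟨θ / ω0, div_nonneg hθ0 hω0.le, ?_, ?_, ?_, ?_⟩
  · exact (div_lt_div_iff_of_pos_right hω0).mpr hθlt
  · rw [hωτ, hcosθ, ha]; field_simp
  · rw [hωτ, hsinθ, hb]; field_simp
  · have hrc : r * Real.cos θ = p2 * ω0 ^ 2 - p0 := by rw [hcosθ, ha]; field_simp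
    have hrs : r * Real.sin θ = p1 * ω0 - ω0 ^ 3 := by rw [hsinθ, hb]; field_simp
    have hexp : -(Complex.I * ω0) * (θ / ω0 : ℝ) = ((-θ : ℝ) : ℂ) * Complex.I := by
      push_cast
      have : (ω0 : ℂ) ≠ 0 := by exact_mod_cast hω0.ne'
      field_simp
    have hrcC := congrArg (Complex.ofReal) hrc
    have hrsC := congrArg (Complex.ofReal) hrs
    push_cast at hrcC hrsC
    rw [hexp, Complex.exp_mul_I, ← Complex.ofReal_cos, ← Complex.ofReal_sin,
      Real.cos_neg, Real.sin_neg]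
    push_cast
    linear_combination hrcC - Complex.I * hrsC + (ω0:ℂ)^3 * Complex.I_sq * Complex.I
      + (ω0:ℂ)^2 * (p2:ℂ) * Complex.I_sq
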